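/- arXiv:math/0212307 — 3 statements merged into one kernel-verified Lean document; each statement's English description precedes it below -/
import Mathlib

section
/- Let D ⊂ ℝⁿ be nonempty compact, φ : D → [0,∞) continuous not identically zero, and f : [0,∞) → [0,∞) continuous, non-decreasing and unbounded. Let H₁(q) := sup_{x ∈ D} φ(x) f(|x − q|). Then for every q* ∈ ℝⁿ there exists p* ∈ co(D) (the convex hull of D) with H₁(p*) ≤ H₁(q*); in particular H₁ attains a global minimum at some point of co(D). -/
open Set

private lemma aux_sum_pad {α : Type*} {M : Type*} [AddCommMonoid M] (t : Finset α) {N k : ℕ}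
    (hcard : k ≤ N) (q : Fin k ≃ {x // x ∈ t}) (e : Fin N → α)
    (hq : ∀ (i : Fin N) (h : (i : ℕ) < k), e i = (q ⟨i, h⟩ : α))
    (F : α → M) :
    ∑ i : Fin N, (if (i : ℕ) < k then F (e i) else 0) = ∑ y ∈ t, F y := by
  classical
  rw [← Finset.sum_filter]
  refine Finset.sum_bij' (fun i _ => e i)
    (fun y hy => Fin.castLE hcard (q.symm ⟨y, hy⟩)) ?_ ?_ ?_ ?_ ?_
  · intro i hi
    have h : (i : ℕ) < k := (Finset.mem_filter.mp hi).2
    have hm : e i ∈ t := by rw [hq i h]; exact (q ⟨i, h⟩).2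
    exact hm
  · intro y hy
    have : Fin.castLE hcard (q.symm ⟨y, hy⟩) ∈
        Finset.filter (fun a : Fin N => (a : ℕ) < k) Finset.univ := by
      simp only [Finset.mem_filter, Finset.mem_univ, true_and]
      exact (q.symm ⟨y, hy⟩).2
    exact this
  · intro i hi
    have h : (i : ℕ) < k := (Finset.mem_filter.mp hi).2
    have key : ∀ hm : e i ∈ t, Fin.castLE hcard (q.symm ⟨e i, hm⟩) = i := by
      intro hm
      have h1 : (⟨e i, hm⟩ : {x // x ∈ t}) = q ⟨i, h⟩ := Subtype.ext (hq i h)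
      rw [h1, Equiv.symm_apply_apply]
      exact Fin.ext rfl
    exact key _
  · intro y hy
    have hlt : ((Fin.castLE hcard (q.symm ⟨y, hy⟩) : Fin N) : ℕ) < k :=
      (q.symm ⟨y, hy⟩).2
    have key : e (Fin.castLE hcard (q.symm ⟨y, hy⟩)) = y := by
      rw [hq _ hlt]
      have h2 : (⟨((Fin.castLE hcard (q.symm ⟨y, hy⟩) : Fin N) : ℕ), hlt⟩ : Fin k)
          = q.symm ⟨y, hy⟩ := Fin.ext rfl
      rw [h2, Equiv.apply_symm_apply]
    exact key
  · intro i hi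
    rfl

private lemma aux_isCompact_convexHull {n : ℕ} {D : Set (EuclideanSpace ℝ (Fin n))}
    (hD : IsCompact D) (hDne : D.Nonempty) : IsCompact (convexHull ℝ D) := by
  classical
  obtain ⟨d₀, hd₀⟩ := hDne
  set N := n + 1 with hNdef
  set g : (Fin N → ℝ) × (Fin N → EuclideanSpace ℝ (Fin n)) → EuclideanSpace ℝ (Fin n) :=
    fun p => ∑ i, p.1 i • p.2 i with hg
  have hgc : Continuous g := by
    apply continuous_finset_sum
    intro i _
    exact ((continuous_apply i).comp continuous_fst).smul
      ((continuous_apply i).comp continuous_snd)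
  have hcomp : IsCompact ((stdSimplex ℝ (Fin N)) ×ˢ (Set.pi (univ : Set (Fin N)) fun _ => D)) :=
    (isCompact_stdSimplex (𝕜 := ℝ) (ι := Fin N)).prod (isCompact_univ_pi fun _ => hD)
  have key : convexHull ℝ D = g '' ((stdSimplex ℝ (Fin N)) ×ˢ (Set.pi (univ : Set (Fin N)) fun _ => D)) := by
    apply Set.Subset.antisymm
    · intro x hx
      rw [convexHull_eq_union] at hx
      simp only [Set.mem_iUnion] at hx
      obtain ⟨t, hts, hai, hxt⟩ := hx
      have hcard : t.card ≤ N := by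
        have h1 := hai.card_le_finrank_succ
        have h2 : Module.finrank ℝ (vectorSpan ℝ
            (Set.range ((↑) : t → EuclideanSpace ℝ (Fin n)))) ≤
            Module.finrank ℝ (EuclideanSpace ℝ (Fin n)) := Submodule.finrank_le _
        have h3 : Module.finrank ℝ (EuclideanSpace ℝ (Fin n)) = n := finrank_euclideanSpace_fin
        simp only [Fintype.card_coe] at h1
        omega
      rw [Finset.convexHull_eq] at hxt
      obtain ⟨w, hw0, hw1, hwx⟩ := hxt
      rw [Finset.centerMass_eq_of_sum_1 _ _ hw1] at hwx
      set k := t.card with hk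
      set q : Fin k ≃ {x // x ∈ t} := t.equivFin.symm with hqdef
      set e : Fin N → EuclideanSpace ℝ (Fin n) :=
        fun i => if h : (i : ℕ) < k then (q ⟨i, h⟩ : EuclideanSpace ℝ (Fin n))
          else d₀ with he
      have hqe : ∀ (i : Fin N) (h : (i : ℕ) < k), e i = (q ⟨i, h⟩ : EuclideanSpace ℝ (Fin n)) :=
        fun i h => dif_pos h
      have hemem : ∀ i : Fin N, (i : ℕ) < k → e i ∈ t := by
        intro i hi
        rw [hqe i hi]
        exact (q ⟨i, hi⟩).2
      set w' : Fin N → ℝ := fun i => if (i : ℕ) < k then w (e i) else 0 with hw'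
      have hsum_w : ∑ i : Fin N, w' i = 1 := by
        rw [show ∑ i : Fin N, w' i
            = ∑ i : Fin N, (if (i : ℕ) < k then w (e i) else 0) from rfl]
        rw [aux_sum_pad t hcard q e hqe w]
        exact hw1
      have hsum_smul : ∑ i : Fin N, w' i • e i = ∑ y ∈ t, w y • y := by
        have h1 : ∀ i : Fin N, w' i • e i
            = (if (i : ℕ) < k then (fun y => w y • y) (e i) else 0) := by
          intro i
          by_cases h : (i : ℕ) < k
          · simp [hw', h]
          · simp [hw', h]
        rw [Finset.sum_congr rfl fun i _ => h1 i]
        exact aux_sum_pad t hcard q e hqe (fun y => w y • y)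
      refine ⟨⟨w', e⟩, ⟨⟨fun i => ?_, hsum_w⟩, fun i _ => ?_⟩, ?_⟩
      · by_cases h : (i : ℕ) < k
        · simp only [hw', if_pos h]
          exact hw0 _ (hemem i h)
        · simp [hw', h]
      · by_cases h : (i : ℕ) < k
        · exact hts (hemem i h)
        · simp only [he, dif_neg h]
          exact hd₀
      · show ∑ i : Fin N, w' i • e i = x
        rw [hsum_smul]
        simpa using hwx
    · rintro _ ⟨⟨w, z⟩, ⟨hw, hz⟩, rfl⟩
      exact (convex_convexHull ℝ D).sum_mem (fun i _ => hw.1 i) hw.2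
        (fun i _ => subset_convexHull ℝ D (hz i (Set.mem_univ i)))
  rw [key]
  exact hcomp.image hgc

/-- `H₁` does not increase under projection into `co(D)`, and it attains
a global minimum at some point of `co(D)`. -/
theorem stmt_4 {n : ℕ} (D : Set (EuclideanSpace ℝ (Fin n)))
    (hD : IsCompact D) (hDne : D.Nonempty)
    (φ : EuclideanSpace ℝ (Fin n) → ℝ) (f : ℝ → ℝ)
    (hφc : ContinuousOn φ D) (hφ0 : ∀ x ∈ D, 0 ≤ φ x)
    (hφne : ∃ x ∈ D, φ x ≠ 0)
    (hfc : ContinuousOn f (Ici 0)) (hfm : MonotoneOn f (Ici 0))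
    (hf0 : ∀ s : ℝ, 0 ≤ s → 0 ≤ f s)
    (hfu : ∀ M : ℝ, ∃ s : ℝ, 0 ≤ s ∧ M ≤ f s) :
    (∀ q : EuclideanSpace ℝ (Fin n), ∃ p ∈ convexHull ℝ D,
      sSup ((fun x => φ x * f ‖x - p‖) '' D) ≤ sSup ((fun x => φ x * f ‖x - q‖) '' D)) ∧
    (∃ p ∈ convexHull ℝ D, ∀ q : EuclideanSpace ℝ (Fin n),
      sSup ((fun x => φ x * f ‖x - p‖) '' D) ≤ sSup ((fun x => φ x * f ‖x - q‖) '' D)) := by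
  set K := convexHull ℝ D with hKdef
  have hKc : IsCompact K := aux_isCompact_convexHull hD hDne
  have hKconv : Convex ℝ K := convex_convexHull ℝ D
  have hDK : D ⊆ K := subset_convexHull ℝ D
  have hKne : K.Nonempty := hDne.mono hDK
  set H : EuclideanSpace ℝ (Fin n) → ℝ := fun q => sSup ((fun x => φ x * f ‖x - q‖) '' D)
    with hHdef
  -- continuity and boundedness facts
  have hcontf : ∀ q, Continuous fun x : EuclideanSpace ℝ (Fin n) => f ‖x - q‖ := fun q =>
    hfc.comp_continuous ((continuous_id.sub continuous_const).norm) fun x => norm_nonneg _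
  have hcont : ∀ q, ContinuousOn (fun x => φ x * f ‖x - q‖) D := fun q =>
    hφc.mul (hcontf q).continuousOn
  have hbdd : ∀ q, BddAbove ((fun x => φ x * f ‖x - q‖) '' D) := fun q =>
    (hD.image_of_continuousOn (hcont q)).bddAbove
  have hne : ∀ q, ((fun x => φ x * f ‖x - q‖) '' D).Nonempty := fun q => hDne.image _
  -- monotonicity of H
  have hmono : ∀ p q : EuclideanSpace ℝ (Fin n),
      (∀ x ∈ D, ‖x - p‖ ≤ ‖x - q‖) → H p ≤ H q := by
    intro p q hpq
    apply csSup_le (hne p)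
    rintro y ⟨x, hx, rfl⟩
    calc φ x * f ‖x - p‖ ≤ φ x * f ‖x - q‖ :=
          mul_le_mul_of_nonneg_left
            (hfm (norm_nonneg _) (norm_nonneg _) (hpq x hx)) (hφ0 x hx)
      _ ≤ H q := le_csSup (hbdd q) ⟨x, hx, rfl⟩
  -- projection onto K
  have hproj : ∀ q : EuclideanSpace ℝ (Fin n), ∃ p ∈ K, ∀ x ∈ D, ‖x - p‖ ≤ ‖x - q‖ := by
    intro q
    obtain ⟨v, hvK, hv⟩ :=
      exists_norm_eq_iInf_of_complete_convex hKne hKc.isClosed.isComplete hKconv q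
    rw [norm_eq_iInf_iff_real_inner_le_zero hKconv hvK] at hv
    refine ⟨v, hvK, fun x hx => ?_⟩
    have h1 := hv x (hDK hx)
    have h2 : ‖x - q‖ ^ 2 = ‖x - v‖ ^ 2 - 2 * inner ℝ (x - v) (q - v) + ‖q - v‖ ^ 2 := by
      have h3 := norm_sub_sq_real (x - v) (q - v)
      have h4 : (x - v) - (q - v) = x - q := by abel
      rw [h4] at h3
      linarith [h3]
    have h5 : (inner ℝ (q - v) (x - v) : ℝ) = inner ℝ (x - v) (q - v) := real_inner_comm _ _
    nlinarith [norm_nonneg (x - q), norm_nonneg (x - v), sq_nonneg ‖q - v‖]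
  -- part 1
  have part1 : ∀ q : EuclideanSpace ℝ (Fin n), ∃ p ∈ K, H p ≤ H q := by
    intro q
    obtain ⟨p, hpK, hp⟩ := hproj q
    exact ⟨p, hpK, hmono p q hp⟩
  refine ⟨part1, ?_⟩
  -- part 2
  obtain ⟨x₀, hx₀⟩ := hDne
  have hHnonneg : ∀ q, 0 ≤ H q := by
    intro q
    have h0 : 0 ≤ φ x₀ * f ‖x₀ - q‖ :=
      mul_nonneg (hφ0 x₀ hx₀) (hf0 _ (norm_nonneg _))
    exact le_trans h0 (le_csSup (hbdd q) ⟨x₀, hx₀, rfl⟩)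
  have hHKne : (H '' K).Nonempty := hKne.image H
  have hHKbdd : BddBelow (H '' K) := ⟨0, by rintro y ⟨p, _, rfl⟩; exact hHnonneg p⟩
  set m := sInf (H '' K) with hm
  -- sublevel sets are closed
  have hsub_closed : ∀ c : ℝ, IsClosed {q : EuclideanSpace ℝ (Fin n) | H q ≤ c} := by
    intro c
    have heq : {q : EuclideanSpace ℝ (Fin n) | H q ≤ c}
        = ⋂ x ∈ D, {q : EuclideanSpace ℝ (Fin n) | φ x * f ‖x - q‖ ≤ c} := by
      ext q
      simp only [Set.mem_setOf_eq, Set.mem_iInter]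
      rw [hHdef]
      simp only
      rw [csSup_le_iff (hbdd q) (hne q)]
      constructor
      · intro h x hx
        exact h _ ⟨x, hx, rfl⟩
      · rintro h y ⟨x, hx, rfl⟩
        exact h x hx
    rw [heq]
    refine isClosed_biInter fun x _ => ?_
    have hc : Continuous fun q : EuclideanSpace ℝ (Fin n) => φ x * f ‖x - q‖ :=
      continuous_const.mul (hfc.comp_continuous
        ((continuous_const.sub continuous_id).norm) fun q => norm_nonneg _)
    exact isClosed_le hc continuous_const
  -- nested nonempty closed sets
  set C : ℕ → Set (EuclideanSpace ℝ (Fin n)) :=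
    fun j => K ∩ {q | H q ≤ m + 1 / (j + 1)} with hC
  have hCne : ∀ j, (C j).Nonempty := by
    intro j
    have hpos : (0 : ℝ) < 1 / (j + 1) := by positivity
    obtain ⟨y, hy, hylt⟩ := exists_lt_of_csInf_lt hHKne (lt_add_of_pos_right m hpos)
    obtain ⟨p, hpK, rfl⟩ := hy
    exact ⟨p, hpK, le_of_lt hylt⟩
  have hCcl : ∀ j, IsClosed (C j) := fun j =>
    hKc.isClosed.inter (hsub_closed _)
  have hCmono : ∀ j, C (j + 1) ⊆ C j := by
    intro j
    rintro p ⟨hpK, hp⟩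
    simp only [Set.mem_setOf_eq] at hp ⊢
    refine ⟨hpK, le_trans hp ?_⟩
    have h1 : (1 : ℝ) / ((j : ℝ) + 1 + 1) ≤ 1 / ((j : ℝ) + 1) := by
      apply one_div_le_one_div_of_le
      · positivity
      · linarith
    push_cast
    linarith
  have hC0 : IsCompact (C 0) := hKc.inter_right (hsub_closed _)
  obtain ⟨p, hp⟩ := IsCompact.nonempty_iInter_of_sequence_nonempty_isCompact_isClosed
    C hCmono hCne hC0 hCcl
  simp only [Set.mem_iInter] at hp
  have hpK : p ∈ K := (hp 0).1
  have hpm : H p ≤ m := by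
    refine le_of_forall_pos_le_add fun ε hε => ?_
    obtain ⟨j, hj⟩ := exists_nat_one_div_lt hε
    have := (hp j).2
    calc H p ≤ m + 1 / (j + 1) := this
      _ ≤ m + ε := by push_cast at hj ⊢; linarith
  refine ⟨p, hpK, fun q => ?_⟩
  obtain ⟨p', hp'K, hp'⟩ := part1 q
  have hmp' : m ≤ H p' := csInf_le hHKbdd ⟨p', hp'K, rfl⟩
  calc H p ≤ m := hpm
    _ ≤ H p' := hmp'
    _ ≤ H q := hp'
end

section
/- Let V ⊂ ℝⁿ \ {0} be a nonempty compact set. Then inf_{q ∈ ℝⁿ} sup_{x ∈ V} |q − x|/|x| < 1 if and only if 0 ∉ co(V), i.e., V is separated from the origin by a hyperplane. -/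
open Set

open scoped RealInnerProductSpace

lemma aux_isCompact_convexHull_s8 {n : ℕ} {V : Set (EuclideanSpace ℝ (Fin n))}
    (hV : IsCompact V) (hne : V.Nonempty) : IsCompact (convexHull ℝ V) := by
  classical
  obtain ⟨v₀, hv₀⟩ := hne
  have hS : IsCompact ((stdSimplex ℝ (Fin (n + 1))) ×ˢ
      (Set.univ.pi fun _ : Fin (n + 1) => V)) :=
    (isCompact_stdSimplex ℝ _).prod (isCompact_univ_pi fun _ => hV)
  have hcont : Continuous (fun p : (Fin (n + 1) → ℝ) × (Fin (n + 1) → EuclideanSpace ℝ (Fin n)) =>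
      ∑ i, p.1 i • p.2 i) := by
    apply continuous_finset_sum
    intro i _
    exact ((continuous_apply i).comp continuous_fst).smul
      ((continuous_apply i).comp continuous_snd)
  have himg : (fun p : (Fin (n + 1) → ℝ) × (Fin (n + 1) → EuclideanSpace ℝ (Fin n)) => ∑ i, p.1 i • p.2 i) ''
      ((stdSimplex ℝ (Fin (n + 1))) ×ˢ (Set.univ.pi fun _ : Fin (n + 1) => V))
        = convexHull ℝ V := by
    apply Subset.antisymm
    · rintro x ⟨⟨w, z⟩, ⟨⟨hw0, hw1⟩, hz⟩, rfl⟩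
      exact (convex_convexHull ℝ V).sum_mem (fun i _ => hw0 i) hw1
        (fun i _ => subset_convexHull ℝ V (hz i (mem_univ i)))
    · intro x hx
      obtain ⟨ι, _, z, w, hzV, hai, hw0, hw1, hsum⟩ :=
        eq_pos_convex_span_of_mem_convexHull hx
      have hcard : Fintype.card ι ≤ n + 1 := by
        have h1 := hai.card_le_finrank_succ
        have h2 : Module.finrank ℝ ↥(vectorSpan ℝ (Set.range z)) ≤ n := by
          have h3 := Submodule.finrank_le (vectorSpan ℝ (Set.range z))
          simpa [finrank_euclideanSpace_fin] using h3
        omega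
      obtain ⟨e⟩ : Nonempty (ι ↪ Fin (n + 1)) :=
        Function.Embedding.nonempty_of_card_le (by simpa using hcard)
      set w' : Fin (n + 1) → ℝ := Function.extend e w 0 with hw'def
      set z' : Fin (n + 1) → EuclideanSpace ℝ (Fin n) := Function.extend e z (fun _ => v₀) with hz'def
      have hmap : ∀ {M : Type} [AddCommMonoid M] (h : Fin (n + 1) → M),
          (∀ j, (¬ ∃ i, e i = j) → h j = 0) → ∑ j, h j = ∑ i, h (e i) := by
        intro M _ h h0
        rw [← Finset.sum_map Finset.univ e h]
        refine (Finset.sum_subset (Finset.subset_univ _) ?_).symm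
        intro j _ hj
        simp only [Finset.mem_map, Finset.mem_univ, true_and] at hj
        exact h0 j hj
      have hw'0 : ∀ j, 0 ≤ w' j := by
        intro j
        by_cases hj : ∃ i, e i = j
        · obtain ⟨i, rfl⟩ := hj
          rw [hw'def, e.injective.extend_apply]
          exact (hw0 i).le
        · rw [hw'def, Function.extend_apply' _ _ _ hj, Pi.zero_apply]
      have hw'vanish : ∀ j, (¬ ∃ i, e i = j) → w' j = 0 := by
        intro j hj
        rw [hw'def, Function.extend_apply' _ _ _ hj, Pi.zero_apply]
      have hw'sum : ∑ j, w' j = 1 := by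
        rw [hmap w' hw'vanish]
        simp only [hw'def, e.injective.extend_apply]
        exact hw1
      have hz'V : ∀ j, z' j ∈ V := by
        intro j
        by_cases hj : ∃ i, e i = j
        · obtain ⟨i, rfl⟩ := hj
          rw [hz'def, e.injective.extend_apply]
          exact hzV ⟨i, rfl⟩
        · rw [hz'def, Function.extend_apply' _ _ _ hj]
          exact hv₀
      refine ⟨(w', z'), ⟨⟨hw'0, hw'sum⟩, fun j _ => hz'V j⟩, ?_⟩
      have hvan : ∀ j, (¬ ∃ i, e i = j) → w' j • z' j = 0 := by
        intro j hj
        rw [hw'vanish j hj, zero_smul]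
      calc ∑ j, w' j • z' j = ∑ i, w' (e i) • z' (e i) := hmap _ hvan
        _ = ∑ i, w i • z i := by
            simp only [hw'def, hz'def, e.injective.extend_apply]
        _ = x := hsum
  rw [← himg]
  exact hS.image hcont

/-- the optimal radially weighted 1-center cost is `< 1` iff the compact
set `V` (not containing the origin) is separated from the origin by a hyperplane,
i.e. `0 ∉ co(V)`. -/
theorem stmt_8 {n : ℕ} (V : Set (EuclideanSpace ℝ (Fin n)))
    (hV : IsCompact V) (hne : V.Nonempty)
    (h0 : (0 : EuclideanSpace ℝ (Fin n)) ∉ V) :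
    (⨅ q : EuclideanSpace ℝ (Fin n), ⨆ x : V,
        ‖q - (x : EuclideanSpace ℝ (Fin n))‖ / ‖(x : EuclideanSpace ℝ (Fin n))‖) < 1 ↔
      (0 : EuclideanSpace ℝ (Fin n)) ∉ convexHull ℝ V := by
  classical
  haveI : Nonempty V := hne.to_subtype
  obtain ⟨x₀, hx₀V, hx₀min⟩ := hV.exists_isMinOn hne continuous_norm.continuousOn
  obtain ⟨x₁, hx₁V, hx₁max⟩ := hV.exists_isMaxOn hne continuous_norm.continuousOn
  have hm : (0 : ℝ) < ‖x₀‖ := by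
    rw [norm_pos_iff]
    rintro rfl
    exact h0 hx₀V
  have hM : (0 : ℝ) < ‖x₁‖ := hm.trans_le (isMinOn_iff.mp hx₀min _ hx₁V)
  have hbddA : ∀ q : EuclideanSpace ℝ (Fin n), BddAbove (Set.range fun x : V => ‖q - (x : EuclideanSpace ℝ (Fin n))‖ / ‖(x : EuclideanSpace ℝ (Fin n))‖) := by
    intro q
    refine ⟨(‖q‖ + ‖x₁‖) / ‖x₀‖, ?_⟩
    rintro r ⟨x, rfl⟩
    have h1 : ‖q - (x : EuclideanSpace ℝ (Fin n))‖ ≤ ‖q‖ + ‖x₁‖ := by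
      refine (norm_sub_le _ _).trans ?_
      have := isMaxOn_iff.mp hx₁max _ x.2
      linarith
    have h2 : ‖x₀‖ ≤ ‖(x : EuclideanSpace ℝ (Fin n))‖ := isMinOn_iff.mp hx₀min _ x.2
    exact div_le_div₀ (by positivity) h1 hm h2
  have hS0 : ∀ q : EuclideanSpace ℝ (Fin n), (0 : ℝ) ≤ ⨆ x : V, ‖q - (x : EuclideanSpace ℝ (Fin n))‖ / ‖(x : EuclideanSpace ℝ (Fin n))‖ := by
    intro q
    exact le_ciSup_of_le (hbddA q) ⟨x₀, hx₀V⟩ (by positivity)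
  have hbddB : BddBelow (Set.range fun q : EuclideanSpace ℝ (Fin n) => ⨆ x : V, ‖q - (x : EuclideanSpace ℝ (Fin n))‖ / ‖(x : EuclideanSpace ℝ (Fin n))‖) := by
    refine ⟨0, ?_⟩
    rintro r ⟨q, rfl⟩
    exact hS0 q
  constructor
  · -- cost < 1 → 0 ∉ hull
    intro hlt hmem
    refine absurd hlt (not_lt.mpr ?_)
    refine le_ciInf fun q => ?_
    by_cases hq : ∀ x ∈ V, ‖q‖ ^ 2 < 2 * ⟪q, x⟫
    · exfalso
      have hlin : IsLinearMap ℝ (fun w : EuclideanSpace ℝ (Fin n) => ⟪q, w⟫) := by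
        constructor
        · intro a b; exact inner_add_right q a b
        · intro c a
          simp only [smul_eq_mul]
          exact real_inner_smul_right q a c
      have hconv : Convex ℝ {w : EuclideanSpace ℝ (Fin n) | ‖q‖ ^ 2 / 2 < ⟪q, w⟫} :=
        convex_halfSpace_gt hlin _
      have hsub : convexHull ℝ V ⊆ {w : EuclideanSpace ℝ (Fin n) | ‖q‖ ^ 2 / 2 < ⟪q, w⟫} := by
        refine convexHull_min ?_ hconv
        intro x hx
        have := hq x hx
        simp only [Set.mem_setOf_eq]
        linarith
      have h00 := hsub hmem
      simp only [Set.mem_setOf_eq, inner_zero_right] at h00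
      nlinarith [sq_nonneg ‖q‖]
    · push_neg at hq
      obtain ⟨x, hxV, hx⟩ := hq
      have hxpos : (0 : ℝ) < ‖x‖ := by
        rw [norm_pos_iff]
        rintro rfl
        exact h0 hxV
      have hsq : ‖x‖ ^ 2 ≤ ‖q - x‖ ^ 2 := by
        have := norm_sub_sq_real q x
        linarith
      have hle : ‖x‖ ≤ ‖q - x‖ := by
        nlinarith [norm_nonneg (q - x), norm_nonneg x]
      have h1 : (1 : ℝ) ≤ ‖q - x‖ / ‖x‖ := (one_le_div hxpos).mpr hle
      exact le_ciSup_of_le (hbddA q) ⟨x, hxV⟩ h1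
  · -- 0 ∉ hull → cost < 1
    intro hmem
    have hKc : IsCompact (convexHull ℝ V) := aux_isCompact_convexHull_s8 hV hne
    obtain ⟨f, u, hfu, hu0⟩ :=
      geometric_hahn_banach_closed_point (convex_convexHull ℝ V) hKc.isClosed hmem
    rw [map_zero] at hu0
    set v : EuclideanSpace ℝ (Fin n) := (InnerProductSpace.toDual ℝ (EuclideanSpace ℝ (Fin n))).symm f with hvdef
    have hfv : ∀ w : EuclideanSpace ℝ (Fin n), ⟪v, w⟫ = f w := fun w => InnerProductSpace.toDual_symm_apply
    set s : ℝ := -u with hsdef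
    have hs : (0 : ℝ) < s := by simp [hsdef]; linarith
    have hvx : ∀ x ∈ V, s < ⟪-v, x⟫ := by
      intro x hx
      have := hfu x (subset_convexHull ℝ V hx)
      rw [← hfv x] at this
      rw [inner_neg_left]
      linarith
    have hvne : (-v : EuclideanSpace ℝ (Fin n)) ≠ 0 := by
      intro hv0
      have := hvx x₀ hx₀V
      rw [hv0, inner_zero_left] at this
      linarith
    have hw : (0 : ℝ) < ‖(-v : EuclideanSpace ℝ (Fin n))‖ := norm_pos_iff.mpr hvne
    set q : EuclideanSpace ℝ (Fin n) := (s / ‖(-v : EuclideanSpace ℝ (Fin n))‖ ^ 2) • (-v) with hqdef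
    set ε : ℝ := s ^ 2 / ‖(-v : EuclideanSpace ℝ (Fin n))‖ ^ 2 with hεdef
    have hε : (0 : ℝ) < ε := by positivity
    have hkey : ∀ x ∈ V, ‖q - x‖ ^ 2 ≤ ‖x‖ ^ 2 - ε := by
      intro x hx
      have hns := norm_sub_sq_real q x
      have hq2 : ‖q‖ ^ 2 = ε := by
        have hv0 : ‖v‖ ≠ 0 := by
          rw [← norm_neg]; exact ne_of_gt hw
        rw [hqdef, norm_smul, mul_pow, Real.norm_eq_abs, sq_abs, hεdef, div_pow, norm_neg]
        field_simp
      have hqx : ε ≤ ⟪q, x⟫ := by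
        rw [hqdef, real_inner_smul_left, hεdef]
        have h1 := (hvx x hx).le
        have h2 : (0 : ℝ) < s / ‖(-v : EuclideanSpace ℝ (Fin n))‖ ^ 2 := by positivity
        calc s ^ 2 / ‖(-v : EuclideanSpace ℝ (Fin n))‖ ^ 2 = (s / ‖(-v : EuclideanSpace ℝ (Fin n))‖ ^ 2) * s := by ring
          _ ≤ (s / ‖(-v : EuclideanSpace ℝ (Fin n))‖ ^ 2) * ⟪-v, x⟫ := by
              exact mul_le_mul_of_nonneg_left h1 h2.le
      linarith
    have hM2 : (0 : ℝ) < ‖x₁‖ ^ 2 := by positivity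
    have hc1 : Real.sqrt (1 - ε / ‖x₁‖ ^ 2) < 1 := by
      rw [Real.sqrt_lt' one_pos]
      have : (0 : ℝ) < ε / ‖x₁‖ ^ 2 := by positivity
      nlinarith
    refine lt_of_le_of_lt (ciInf_le_of_le hbddB q ?_) hc1
    refine ciSup_le fun x => ?_
    have hxV := x.2
    have hxpos : (0 : ℝ) < ‖(x : EuclideanSpace ℝ (Fin n))‖ := by
      rw [norm_pos_iff]
      intro hx0
      exact h0 (hx0 ▸ hxV)
    have hxM : ‖(x : EuclideanSpace ℝ (Fin n))‖ ≤ ‖x₁‖ := isMaxOn_iff.mp hx₁max _ hxV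
    have hxM2 : ‖(x : EuclideanSpace ℝ (Fin n))‖ ^ 2 ≤ ‖x₁‖ ^ 2 := by nlinarith
    have h5 : ε / ‖x₁‖ ^ 2 * ‖(x : EuclideanSpace ℝ (Fin n))‖ ^ 2 ≤ ε := by
      have h6 := mul_le_mul_of_nonneg_left hxM2 (le_of_lt (div_pos hε hM2))
      rwa [div_mul_cancel₀ _ (ne_of_gt hM2)] at h6
    have hratio : (‖q - (x : EuclideanSpace ℝ (Fin n))‖ / ‖(x : EuclideanSpace ℝ (Fin n))‖) ^ 2 ≤ 1 - ε / ‖x₁‖ ^ 2 := by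
      rw [div_pow, div_le_iff₀ (by positivity)]
      have := hkey x hxV
      nlinarith
    calc ‖q - (x : EuclideanSpace ℝ (Fin n))‖ / ‖(x : EuclideanSpace ℝ (Fin n))‖
        = Real.sqrt ((‖q - (x : EuclideanSpace ℝ (Fin n))‖ / ‖(x : EuclideanSpace ℝ (Fin n))‖) ^ 2) :=
          (Real.sqrt_sq (by positivity)).symm
      _ ≤ Real.sqrt (1 - ε / ‖x₁‖ ^ 2) := Real.sqrt_le_sqrt hratio
end

section
/- Let A, B, K be real matrices with A of size n×n, B of size n×m, K of size m×n, such that A + BK is Hurwitz (all eigenvalues have negative real part), and let P be the unique positive definite symmetric matrix satisfying (A+BK)ᵀP + P(A+BK) = −I. If A is not Hurwitz-stable (i.e., AᵀP + PA has a nonnegative eigenvalue, equivalently some eigenvalue of A has nonnegative real part), then the operator norm of PBK satisfies ‖PBK‖ ≥ 1/2. -/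
open Matrix

/-- if `A + BK` is Hurwitz, `P` solves the Lyapunov equation
`(A+BK)ᵀP + P(A+BK) = -I`, and `A` is not Hurwitz-stable (i.e. `AᵀP + PA` has a
nonnegative eigenvalue), then the Euclidean operator norm of `PBK` is at least `1/2`. -/
theorem stmt_13 {n m : ℕ} (A : Matrix (Fin n) (Fin n) ℝ)
    (B : Matrix (Fin n) (Fin m) ℝ) (K : Matrix (Fin m) (Fin n) ℝ)
    (hHurwitz : ∀ μ ∈ spectrum ℂ ((A + B * K).map (Complex.ofReal)), μ.re < 0)
    (P : Matrix (Fin n) (Fin n) ℝ) (hPpos : P.PosDef) (hPsymm : P.IsSymm)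
    (hLyap : (A + B * K)ᵀ * P + P * (A + B * K) = -1)
    (hA : ∃ μ ∈ spectrum ℝ (Aᵀ * P + P * A), 0 ≤ μ) :
    (1 : ℝ) / 2 ≤ ‖Matrix.toEuclideanCLM (𝕜 := ℝ) (P * B * K)‖ := by
  obtain ⟨μ, hμ, hμ0⟩ := hA
  set Q : Matrix (Fin n) (Fin n) ℝ := Aᵀ * P + P * A with hQ
  set M : Matrix (Fin n) (Fin n) ℝ := P * B * K with hM
  -- rewrite the Lyapunov equation
  have key : Q = -1 - (Mᵀ + M) := by
    have h1 : (A + B * K)ᵀ * P + P * (A + B * K) = Q + (Mᵀ + M) := by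
      simp only [hQ, hM, transpose_add, transpose_mul, hPsymm.eq, add_mul, mul_add, Matrix.mul_assoc]
      abel
    rw [h1] at hLyap
    rw [eq_sub_iff_add_eq]
    exact hLyap
  -- extract an eigenvector
  have hev : Module.End.HasEigenvalue (Matrix.toLinAlgEquiv' Q) μ := by
    rw [Module.End.hasEigenvalue_iff_mem_spectrum, AlgEquiv.spectrum_eq Matrix.toLinAlgEquiv' Q]
    exact hμ
  obtain ⟨v, hv⟩ := hev.exists_hasEigenvector
  have hv0 : v ≠ 0 := hv.2
  have hveq : Q *ᵥ v = μ • v := by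
    have h := hv.apply_eq_smul
    rwa [Matrix.toLinAlgEquiv'_apply] at h
  -- quadratic forms
  have hsym : v ⬝ᵥ (Mᵀ *ᵥ v) = v ⬝ᵥ (M *ᵥ v) := by
    rw [dotProduct_mulVec, vecMul_transpose, dotProduct_comm]
  have hQv : v ⬝ᵥ (Q *ᵥ v) = μ * (v ⬝ᵥ v) := by
    rw [hveq, dotProduct_smul]; rfl
  have hQv' : v ⬝ᵥ (Q *ᵥ v) = -(v ⬝ᵥ v) - 2 * (v ⬝ᵥ (M *ᵥ v)) := by
    rw [key]
    simp only [sub_mulVec, add_mulVec, neg_mulVec, one_mulVec, dotProduct_sub, dotProduct_add,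
      dotProduct_neg, hsym]
    ring
  have hvv : 0 < v ⬝ᵥ v := by
    obtain ⟨i, hi⟩ := Function.ne_iff.mp hv0
    have hi' : v i ≠ 0 := by simpa using hi
    exact Finset.sum_pos' (fun j _ => mul_self_nonneg (v j))
      ⟨i, Finset.mem_univ i, mul_self_pos.mpr hi'⟩
  -- the quadratic form of M is at most -(v⬝v)/2
  have hMv : v ⬝ᵥ (M *ᵥ v) ≤ -(v ⬝ᵥ v) / 2 := by
    have := hQv.symm.trans hQv'
    nlinarith
  -- relate to the operator norm
  set w : EuclideanSpace ℝ (Fin n) := (WithLp.equiv 2 (Fin n → ℝ)).symm v with hw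
  set T := Matrix.toEuclideanCLM (𝕜 := ℝ) M with hT
  have hTw : T w = (WithLp.equiv 2 (Fin n → ℝ)).symm (M *ᵥ v) := by
    rw [hw, hT, WithLp.equiv_symm_apply, Matrix.toEuclideanCLM_toLp]
  have hinner : (inner ℝ w (T w) : ℝ) = v ⬝ᵥ (M *ᵥ v) := by
    rw [hTw, PiLp.inner_apply]
    simp [hw, dotProduct, mul_comm]
  have hnw : ‖w‖ ^ 2 = v ⬝ᵥ v := by
    rw [← real_inner_self_eq_norm_sq, PiLp.inner_apply]
    rfl
  have hbound : |(inner ℝ w (T w) : ℝ)| ≤ ‖T‖ * ‖w‖ ^ 2 := by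
    calc |(inner ℝ w (T w) : ℝ)| ≤ ‖w‖ * ‖T w‖ := abs_real_inner_le_norm w (T w)
    _ ≤ ‖w‖ * (‖T‖ * ‖w‖) := by
        have := T.le_opNorm w
        have h0 : (0:ℝ) ≤ ‖w‖ := norm_nonneg w
        nlinarith [norm_nonneg (T w)]
    _ = ‖T‖ * ‖w‖ ^ 2 := by ring
  rw [hinner, hnw] at hbound
  have habs : (v ⬝ᵥ v) / 2 ≤ |v ⬝ᵥ (M *ᵥ v)| := by
    rw [abs_of_nonpos (by nlinarith)]
    linarith
  have hTnn : 0 ≤ ‖T‖ := norm_nonneg T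
  nlinarith
end
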